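/- For every x ∈ ℝ^n with x ≥ 0 and every feasible assignment y¹ ∈ Y_i, there exists an assignment y² ∈ Ȳ_i (i.e., y² ∈ Y_i with Σ_{j∈J} Σ_{k∈K} y²_{jk} = n) such that Σ_{j∈J} Σ_{k∈K} d^k_{ij} x_j y²_{jk} ≥ Σ_{j∈J} Σ_{k∈K} d^k_{ij} x_j y¹_{jk}. Consequently, max_{y∈Y_i} Σ_{j,k} d^k_{ij} x_j y_{jk} = max_{y∈Ȳ_i} Σ_{j,k} d^k_{ij} x_j y_{jk}. -/

import Mathlib

open Finset

/-- The band index set `K = {K⁻, …, -1, 0, 1, …, K⁺}`. -/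
noncomputable def bands (Km Kp : ℤ) : Finset ℤ := Finset.Icc Km Kp

/-- `Y_i`: the set of feasible 0-1 deviation assignments. -/
def memY (n : ℕ) (Km Kp : ℤ) (l u : ℤ → ℕ) (y : Fin n → ℤ → ℕ) : Prop :=
  (∀ j : Fin n, ∀ k ∈ bands Km Kp, y j k ≤ 1) ∧
  (∀ k ∈ bands Km Kp, l k ≤ ∑ j : Fin n, y j k ∧ ∑ j : Fin n, y j k ≤ u k) ∧
  (∀ j : Fin n, ∑ k ∈ bands Km Kp, y j k ≤ 1)

/-- `Ȳ_i`: feasible deviation assignments distributing all `n` coefficients among the bands. -/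
def memYbar (n : ℕ) (Km Kp : ℤ) (l u : ℤ → ℕ) (y : Fin n → ℤ → ℕ) : Prop :=
  memY n Km Kp l u y ∧ ∑ j : Fin n, ∑ k ∈ bands Km Kp, y j k = n

/-- for every `x ≥ 0` and every `y¹ ∈ Y_i` there is `y² ∈ Ȳ_i` with at least the
same total deviation; consequently the maximum total deviation over `Y_i` equals the maximum
over `Ȳ_i`. -/
theorem stmt_8 (n : ℕ) (hn : 0 < n) (Km Kp : ℤ) (hKm : Km < 0) (hKp : 0 < Kp)
    (d : Fin n → ℤ → ℝ) (hd0 : ∀ j : Fin n, d j 0 = 0)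
    (l u : ℤ → ℕ)
    (hlu : ∀ k ∈ bands Km Kp, l k ≤ u k)
    (hun : ∀ k ∈ bands Km Kp, u k ≤ n)
    (hu0 : u 0 = n)
    (hl : ∑ k ∈ bands Km Kp, l k ≤ n)
    (x : Fin n → ℝ) (hx : ∀ j, 0 ≤ x j) :
    (∀ y1 : Fin n → ℤ → ℕ, memY n Km Kp l u y1 →
      ∃ y2 : Fin n → ℤ → ℕ, memYbar n Km Kp l u y2 ∧
        ∑ j : Fin n, ∑ k ∈ bands Km Kp, d j k * x j * (y1 j k : ℝ) ≤
        ∑ j : Fin n, ∑ k ∈ bands Km Kp, d j k * x j * (y2 j k : ℝ)) ∧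
    sSup {v : ℝ | ∃ y : Fin n → ℤ → ℕ, memY n Km Kp l u y ∧
        v = ∑ j : Fin n, ∑ k ∈ bands Km Kp, d j k * x j * (y j k : ℝ)}
      =
    sSup {v : ℝ | ∃ y : Fin n → ℤ → ℕ, memYbar n Km Kp l u y ∧
        v = ∑ j : Fin n, ∑ k ∈ bands Km Kp, d j k * x j * (y j k : ℝ)} := by
  have h0K : (0:ℤ) ∈ bands Km Kp := by
    simp only [bands, Finset.mem_Icc]; omega
  have part1 : ∀ y1 : Fin n → ℤ → ℕ, memY n Km Kp l u y1 →
      ∃ y2 : Fin n → ℤ → ℕ, memYbar n Km Kp l u y2 ∧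
        ∑ j : Fin n, ∑ k ∈ bands Km Kp, d j k * x j * (y1 j k : ℝ) ≤
        ∑ j : Fin n, ∑ k ∈ bands Km Kp, d j k * x j * (y2 j k : ℝ) := by
    intro y1 hy1
    obtain ⟨h1, h2, h3⟩ := hy1
    set s : Fin n → ℕ := fun j => ∑ k ∈ (bands Km Kp).erase 0, y1 j k with hs
    have hsplit : ∀ j, y1 j 0 + s j = ∑ k ∈ bands Km Kp, y1 j k := fun j =>
      Finset.add_sum_erase _ _ h0K
    have hs1 : ∀ j, y1 j 0 + s j ≤ 1 := fun j => (hsplit j) ▸ h3 j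
    set y2 : Fin n → ℤ → ℕ := fun j k => if k = 0 then 1 - s j else y1 j k with hy2
    have hrow : ∀ j, ∑ k ∈ bands Km Kp, y2 j k = 1 := by
      intro j
      rw [← Finset.add_sum_erase _ _ h0K]
      have he : ∑ k ∈ (bands Km Kp).erase 0, y2 j k = s j := by
        refine Finset.sum_congr rfl fun k hk => ?_
        simp [hy2, Finset.ne_of_mem_erase hk]
      have : y2 j 0 = 1 - s j := by simp [hy2]
      rw [he, this]
      have := hs1 j; omega
    refine ⟨y2, ⟨⟨?_, ?_, ?_⟩, ?_⟩, ?_⟩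
    · intro j k hk
      by_cases hk0 : k = 0
      · simp [hy2, hk0]
      · simpa [hy2, hk0] using h1 j k hk
    · intro k hk
      by_cases hk0 : k = 0
      · subst hk0
        constructor
        · calc l 0 ≤ ∑ j : Fin n, y1 j 0 := (h2 0 h0K).1
            _ ≤ ∑ j : Fin n, y2 j 0 := by
              refine Finset.sum_le_sum fun j _ => ?_
              have := hs1 j; simp [hy2]; omega
        · rw [hu0]
          calc ∑ j : Fin n, y2 j 0 ≤ ∑ _j : Fin n, 1 := by
                refine Finset.sum_le_sum fun j _ => ?_
                simp [hy2]
            _ = n := by simp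
      · have : ∀ j : Fin n, y2 j k = y1 j k := fun j => by simp [hy2, hk0]
        simp only [this]
        exact h2 k hk
    · intro j; rw [hrow j]
    · rw [Finset.sum_congr rfl fun j _ => hrow j]; simp
    · refine le_of_eq (Finset.sum_congr rfl fun j _ => ?_)
      rw [← Finset.add_sum_erase _ (fun k => d j k * x j * (y1 j k : ℝ)) h0K,
          ← Finset.add_sum_erase _ (fun k => d j k * x j * (y2 j k : ℝ)) h0K]
      rw [hd0 j]
      simp only [zero_mul]
      refine congrArg _ (Finset.sum_congr rfl fun k hk => ?_)
      have : y2 j k = y1 j k := by simp [hy2, Finset.ne_of_mem_erase hk]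
      rw [this]
  refine ⟨part1, ?_⟩
  set S1 : Set ℝ := {v : ℝ | ∃ y : Fin n → ℤ → ℕ, memY n Km Kp l u y ∧
      v = ∑ j : Fin n, ∑ k ∈ bands Km Kp, d j k * x j * (y j k : ℝ)} with hS1
  set S2 : Set ℝ := {v : ℝ | ∃ y : Fin n → ℤ → ℕ, memYbar n Km Kp l u y ∧
      v = ∑ j : Fin n, ∑ k ∈ bands Km Kp, d j k * x j * (y j k : ℝ)} with hS2
  have hsub : S2 ⊆ S1 := fun v ⟨y, hy, hv⟩ => ⟨y, hy.1, hv⟩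
  have hbdd : BddAbove S1 := by
    refine ⟨∑ j : Fin n, ∑ k ∈ bands Km Kp, |d j k * x j|, ?_⟩
    rintro v ⟨y, ⟨h1, _, _⟩, rfl⟩
    refine Finset.sum_le_sum fun j _ => Finset.sum_le_sum fun k hk => ?_
    have hy1 : (y j k : ℝ) ≤ 1 := by exact_mod_cast h1 j k hk
    calc d j k * x j * (y j k : ℝ) ≤ |d j k * x j * (y j k : ℝ)| := le_abs_self _
      _ = |d j k * x j| * (y j k : ℝ) := by
          rw [abs_mul, Nat.abs_cast]
      _ ≤ |d j k * x j| * 1 := by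
          exact mul_le_mul_of_nonneg_left hy1 (abs_nonneg _)
      _ = |d j k * x j| := mul_one _
  by_cases hne : S1.Nonempty
  · obtain ⟨v, y, hy, rfl⟩ := hne
    obtain ⟨y2, hy2, hle⟩ := part1 y hy
    have hS2ne : S2.Nonempty := ⟨_, y2, hy2, rfl⟩
    have hS1ne : S1.Nonempty := ⟨_, y, hy, rfl⟩
    refine le_antisymm ?_ (csSup_le_csSup hbdd hS2ne hsub)
    refine csSup_le hS1ne ?_
    rintro w ⟨y1, hy1, rfl⟩
    obtain ⟨y2', hy2', hle'⟩ := part1 y1 hy1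
    exact le_trans hle' (le_csSup (hbdd.mono hsub) ⟨y2', hy2', rfl⟩)
  · rw [Set.not_nonempty_iff_eq_empty] at hne
    have : S2 = ∅ := Set.eq_empty_of_subset_empty (hne ▸ hsub)
    rw [hne, this]
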